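/- Under the change of variables α = v/2 + √ρ, β = v/2 - √ρ (ρ > 0), smooth solutions of the system ρ_t + ((3/4)ρ² + (3/4)ρv²)_x = 0, (ρv)_t + ((3/2)ρ²v + (3/4)ρv³)_x = 0 correspond to solutions of the diagonal system α_t + (3/8)(5α² + 2αβ + β²)α_x = 0, β_t + (3/8)(α² + 2αβ + 5β²)β_x = 0. -/

import Mathlib

lemma mkdv_key (r s u rx rt ux ut : ℝ) (hs : 0 < s) (hsr : s^2 = r) :
    (rt + ((3/2)*r*rx + (3/4)*u^2*rx + (3/2)*r*u*ux) = 0 ∧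
     rt*u + r*ut + (3*r*u*rx + (3/2)*r^2*ux + (3/4)*u^3*rx + (9/4)*r*u^2*ux) = 0)
    ↔
    (ut/2 + rt/(2*s)
        + (3/8) * (5*(u/2+s)^2 + 2*(u/2+s)*(u/2-s) + (u/2-s)^2) * (ux/2 + rx/(2*s)) = 0 ∧
     ut/2 - rt/(2*s)
        + (3/8) * ((u/2+s)^2 + 2*(u/2+s)*(u/2-s) + 5*(u/2-s)^2) * (ux/2 - rx/(2*s)) = 0) := by
  subst hsr
  have hs0 : s ≠ 0 := ne_of_gt hs
  constructor
  · rintro ⟨h1, h2⟩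
    constructor
    · field_simp
      apply mul_left_cancel₀ hs0
      linear_combination 32*(s-u) * h1 + 32 * h2
    · field_simp
      apply mul_left_cancel₀ hs0
      linear_combination -32*(s+u) * h1 + 32 * h2
  · rintro ⟨h1, h2⟩
    field_simp at h1 h2
    constructor
    · have e1 : (rt + ((3/2)*s^2*rx + (3/4)*u^2*rx + (3/2)*s^2*u*ux)) * (4096*s) = 0 := by
        linear_combination 64*s*(h1 - h2)
      exact (mul_eq_zero.mp e1).resolve_right (by positivity)
    · have e2 : (rt*u + s^2*ut + (3*s^2*u*rx + (3/2)*(s^2)^2*ux + (3/4)*u^3*rx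
          + (9/4)*s^2*u^2*ux)) * (4096*s) = 0 := by
        linear_combination 64*s*((u+s) * h1 + (s-u) * h2)
      exact (mul_eq_zero.mp e2).resolve_right (by positivity)

/-- For ρ > 0 and C¹ functions, the mKdV hydrodynamic system in conservation form
is equivalent to the diagonal system for the Riemann invariants
α = v/2 + √ρ, β = v/2 - √ρ. -/
theorem mkdv_riemann_invariants (ρ v : ℝ → ℝ → ℝ)
    (hρ : ContDiff ℝ 1 (fun p : ℝ × ℝ => ρ p.1 p.2))
    (hv : ContDiff ℝ 1 (fun p : ℝ × ℝ => v p.1 p.2))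
    (hpos : ∀ x t, 0 < ρ x t) :
    (∀ x t : ℝ,
        deriv (fun s => ρ x s) t
          + deriv (fun y => (3/4) * (ρ y t)^2 + (3/4) * ρ y t * (v y t)^2) x = 0 ∧
        deriv (fun s => ρ x s * v x s) t
          + deriv (fun y => (3/2) * (ρ y t)^2 * v y t + (3/4) * ρ y t * (v y t)^3) x = 0)
    ↔
    (∀ x t : ℝ,
        deriv (fun s => v x s / 2 + Real.sqrt (ρ x s)) t
          + (3/8) * (5 * (v x t / 2 + Real.sqrt (ρ x t))^2
              + 2 * (v x t / 2 + Real.sqrt (ρ x t)) * (v x t / 2 - Real.sqrt (ρ x t))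
              + (v x t / 2 - Real.sqrt (ρ x t))^2)
            * deriv (fun y => v y t / 2 + Real.sqrt (ρ y t)) x = 0 ∧
        deriv (fun s => v x s / 2 - Real.sqrt (ρ x s)) t
          + (3/8) * ((v x t / 2 + Real.sqrt (ρ x t))^2
              + 2 * (v x t / 2 + Real.sqrt (ρ x t)) * (v x t / 2 - Real.sqrt (ρ x t))
              + 5 * (v x t / 2 - Real.sqrt (ρ x t))^2)
            * deriv (fun y => v y t / 2 - Real.sqrt (ρ y t)) x = 0) := by
  have hρd : Differentiable ℝ (fun p : ℝ × ℝ => ρ p.1 p.2) := hρ.differentiable one_ne_zero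
  have hvd : Differentiable ℝ (fun p : ℝ × ℝ => v p.1 p.2) := hv.differentiable one_ne_zero
  have key : ∀ x t : ℝ,
      ((deriv (fun s => ρ x s) t
          + deriv (fun y => (3/4) * (ρ y t)^2 + (3/4) * ρ y t * (v y t)^2) x = 0 ∧
        deriv (fun s => ρ x s * v x s) t
          + deriv (fun y => (3/2) * (ρ y t)^2 * v y t + (3/4) * ρ y t * (v y t)^3) x = 0)
      ↔
      (deriv (fun s => v x s / 2 + Real.sqrt (ρ x s)) t
          + (3/8) * (5 * (v x t / 2 + Real.sqrt (ρ x t))^2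
              + 2 * (v x t / 2 + Real.sqrt (ρ x t)) * (v x t / 2 - Real.sqrt (ρ x t))
              + (v x t / 2 - Real.sqrt (ρ x t))^2)
            * deriv (fun y => v y t / 2 + Real.sqrt (ρ y t)) x = 0 ∧
        deriv (fun s => v x s / 2 - Real.sqrt (ρ x s)) t
          + (3/8) * ((v x t / 2 + Real.sqrt (ρ x t))^2
              + 2 * (v x t / 2 + Real.sqrt (ρ x t)) * (v x t / 2 - Real.sqrt (ρ x t))
              + 5 * (v x t / 2 - Real.sqrt (ρ x t))^2)
            * deriv (fun y => v y t / 2 - Real.sqrt (ρ y t)) x = 0)) := by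
    intro x t
    -- differentiability of the slices
    have hrx : HasDerivAt (fun y => ρ y t) (deriv (fun y => ρ y t) x) x :=
      (DifferentiableAt.comp x (hρd _)
        ((differentiableAt_id.prodMk (differentiableAt_const t)))).hasDerivAt
    have hrt : HasDerivAt (fun s => ρ x s) (deriv (fun s => ρ x s) t) t :=
      (DifferentiableAt.comp t (hρd _)
        (((differentiableAt_const x).prodMk differentiableAt_id))).hasDerivAt
    have hux : HasDerivAt (fun y => v y t) (deriv (fun y => v y t) x) x :=
      (DifferentiableAt.comp x (hvd _)
        ((differentiableAt_id.prodMk (differentiableAt_const t)))).hasDerivAt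
    have hut : HasDerivAt (fun s => v x s) (deriv (fun s => v x s) t) t :=
      (DifferentiableAt.comp t (hvd _)
        (((differentiableAt_const x).prodMk differentiableAt_id))).hasDerivAt
    set rx := deriv (fun y => ρ y t) x with hrxdef
    set rt := deriv (fun s => ρ x s) t with hrtdef
    set ux := deriv (fun y => v y t) x with huxdef
    set ut := deriv (fun s => v x s) t with hutdef
    have hne : ρ x t ≠ 0 := (hpos x t).ne'
    -- spatial flux derivatives
    have Hf1 : HasDerivAt (fun y => (3/4) * (ρ y t)^2 + (3/4) * ρ y t * (v y t)^2)
        ((3/2)*(ρ x t)*rx + (3/4)*(v x t)^2*rx + (3/2)*(ρ x t)*(v x t)*ux) x := by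
      have h := ((hrx.pow 2).const_mul (3/4 : ℝ)).add
        ((hrx.const_mul (3/4 : ℝ)).mul (hux.pow 2))
      refine h.congr_deriv ?_
      push_cast [Pi.pow_apply]
      ring
    have Hf2 : HasDerivAt (fun y => (3/2) * (ρ y t)^2 * v y t + (3/4) * ρ y t * (v y t)^3)
        (3*(ρ x t)*(v x t)*rx + (3/2)*(ρ x t)^2*ux + (3/4)*(v x t)^3*rx
          + (9/4)*(ρ x t)*(v x t)^2*ux) x := by
      have h := (((hrx.pow 2).const_mul (3/2 : ℝ)).mul hux).add
        ((hrx.const_mul (3/4 : ℝ)).mul (hux.pow 3))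
      refine h.congr_deriv ?_
      push_cast [Pi.pow_apply]
      ring
    have Hm : HasDerivAt (fun s => ρ x s * v x s) (rt * v x t + ρ x t * ut) t := hrt.mul hut
    have Hat : HasDerivAt (fun s => v x s / 2 + Real.sqrt (ρ x s))
        (ut / 2 + rt / (2 * Real.sqrt (ρ x t))) t := (hut.div_const 2).add (hrt.sqrt hne)
    have Hax : HasDerivAt (fun y => v y t / 2 + Real.sqrt (ρ y t))
        (ux / 2 + rx / (2 * Real.sqrt (ρ x t))) x := (hux.div_const 2).add (hrx.sqrt hne)
    have Hbt : HasDerivAt (fun s => v x s / 2 - Real.sqrt (ρ x s))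
        (ut / 2 - rt / (2 * Real.sqrt (ρ x t))) t := (hut.div_const 2).sub (hrt.sqrt hne)
    have Hbx : HasDerivAt (fun y => v y t / 2 - Real.sqrt (ρ y t))
        (ux / 2 - rx / (2 * Real.sqrt (ρ x t))) x := (hux.div_const 2).sub (hrx.sqrt hne)
    rw [Hf1.deriv, Hf2.deriv, Hm.deriv, Hat.deriv, Hax.deriv, Hbt.deriv, Hbx.deriv]
    have hspos : 0 < Real.sqrt (ρ x t) := Real.sqrt_pos.mpr (hpos x t)
    have hsr : Real.sqrt (ρ x t) ^ 2 = ρ x t := Real.sq_sqrt (hpos x t).le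
    exact mkdv_key (ρ x t) (Real.sqrt (ρ x t)) (v x t) rx rt ux ut hspos hsr
  constructor
  · intro H x t
    exact (key x t).mp (H x t)
  · intro H x t
    exact (key x t).mpr (H x t)
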